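/- Let G = (V, E⃗) be a finite connected directed weighted graph satisfying the Kirchhoff assumption, and suppose A, B are subgraphs and U is a part of G such that V = V_A ⊔ V_B = V_{A°} ⊔ V_{B°} ⊔ V_U (disjoint unions), E⃗ = E⃗_A ⊔ E⃗_B ⊔ E⃗_U, and the edge boundaries of A and B both equal E⃗_U. Then for all 1 ≤ k, l ≤ min(#V_{A°}, #V_{B°}): λ_{k+l}(S_G) ≤ max( λ_k(S^D_{A°}), λ_l(S^D_{B°}) ), where eigenvalues are listed increasingly with multiplicity. -/

import Mathlib

open Finset

/-- The weighted inner product `(f,g)_m = ∑_x m(x) f(x) conj(g(x))` on functions `W → ℂ`. -/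
noncomputable def innerM {W : Type*} [Fintype W] (m : W → ℝ) (f g : W → ℂ) : ℂ :=
  ∑ x, (m x : ℂ) * f x * (starRingEnd ℂ) (g x)

/-- The self-adjoint operator `S f(x) = (1/m(x)) ∑_y a(x,y) (f(x) - f(y))`, where
`a(x,y) = b(x,y) + b(y,x)`. -/
noncomputable def opS {W : Type*} [Fintype W] (m : W → ℝ) (b : W → W → ℝ)
    (f : W → ℂ) (x : W) : ℂ :=
  (1 / (m x : ℂ)) * ∑ y, ((b x y + b y x : ℝ) : ℂ) * (f x - f y)

/-- `μ : Fin N → ℝ` lists, increasingly and with multiplicity, eigenvalues of the operator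
`S` which is self-adjoint for the weighted inner product with weight `m`: `μ` is monotone
and there is a corresponding `m`-orthonormal family of eigenfunctions.  When
`N = dim = card W`, such a family is an orthonormal basis, so `μ` is exactly the increasing
enumeration `λ_1 ≤ … ≤ λ_N` of the eigenvalues of `S` with multiplicity. -/
def IsMonoEigenListing {W : Type*} [Fintype W] (m : W → ℝ)
    (S : (W → ℂ) → (W → ℂ)) {N : ℕ} (μ : Fin N → ℝ) : Prop :=
  Monotone μ ∧ ∃ u : Fin N → (W → ℂ),
    (∀ i j, innerM m (u i) (u j) = if i = j then 1 else 0) ∧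
    ∀ i, S (u i) = fun x => ((μ i : ℝ) : ℂ) * u i x

/-- `x` and `y` are neighbours in the directed weighted graph with edge weight `b`. -/
def Nbr {V : Type*} (b : V → V → ℝ) (x y : V) : Prop := 0 < b x y ∨ 0 < b y x

/-- Kirchhoff assumption: `β⁺(x) = β⁻(x)` for all `x`. -/
def Kirchhoff {V : Type*} [Fintype V] (b : V → V → ℝ) : Prop :=
  ∀ x, ∑ y, b x y = ∑ y, b y x

/-- The graph with edge weight `b` is connected, ignoring orientation. -/
def ConnectedGraph {V : Type*} (b : V → V → ℝ) : Prop :=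
  ∀ x y : V, Relation.ReflTransGen (Nbr b) x y

/-- The subgraph of `b` induced on `U` is connected, ignoring orientation. -/
def ConnOn {V : Type*} (b : V → V → ℝ) (U : Finset V) : Prop :=
  ∀ x ∈ U, ∀ y ∈ U,
    Relation.ReflTransGen (fun u v => u ∈ U ∧ v ∈ U ∧ Nbr b u v) x y

/-- The interior of a set of vertices: those of its vertices all of whose neighbours lie
in the set. -/
def interiorSet {V : Type*} (b : V → V → ℝ) (Ω : Set V) : Set V :=
  {x | x ∈ Ω ∧ ∀ y, Nbr b x y → y ∈ Ω}

/-- The operator `S_H` of the subgraph induced on `U` (weights restricted from the ambient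
graph), acting on functions `↥U → ℂ`. -/
noncomputable def opSsub {V : Type*} [Fintype V] (m : V → ℝ) (b : V → V → ℝ)
    (U : Finset V) : (↥U → ℂ) → (↥U → ℂ) :=
  opS (fun x : ↥U => m ↑x) (fun x y : ↥U => b ↑x ↑y)

/-- The Dirichlet operator `S^D_U`, acting on functions supported in `U` (identified with
functions `↥U → ℂ`, extended by zero): `S^D_U f(x) = (1/m(x)) ∑_{y ∈ V} a(x,y)(f(x)-f(y))`
for `x ∈ U`. -/
noncomputable def opSDir {V : Type*} [Fintype V] [DecidableEq V] (m : V → ℝ) (b : V → V → ℝ)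
    (U : Finset V) (f : ↥U → ℂ) (x : ↥U) : ℂ :=
  (1 / (m ↑x : ℂ)) * ∑ y : V, ((b ↑x y + b y ↑x : ℝ) : ℂ) *
    (f x - (if h : y ∈ U then f ⟨y, h⟩ else 0))

/-- The Dirichlet Laplacian `Δ^D_U`, acting on functions supported in `U`:
`Δ^D_U f(x) = (1/m(x)) ∑_{y ∈ V} b(x,y)(f(x)-f(y))` for `x ∈ U`. -/
noncomputable def opDeltaDir {V : Type*} [Fintype V] [DecidableEq V] (m : V → ℝ) (b : V → V → ℝ)
    (U : Finset V) (f : ↥U → ℂ) (x : ↥U) : ℂ :=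
  (1 / (m ↑x : ℂ)) * ∑ y : V, ((b ↑x y : ℝ) : ℂ) *
    (f x - (if h : y ∈ U then f ⟨y, h⟩ else 0))

/-- extension by zero -/
noncomputable def extZ {V : Type*} [DecidableEq V] (U : Finset V) (g : ↥U → ℂ) (x : V) : ℂ :=
  if hx : x ∈ U then g ⟨x, hx⟩ else 0

@[simp] lemma extZ_coe {V : Type*} [DecidableEq V] (U : Finset V) (g : ↥U → ℂ) (x : ↥U) :
    extZ U g ↑x = g x := by rw [extZ, dif_pos x.2, Subtype.coe_eta]

lemma extZ_not_mem {V : Type*} [DecidableEq V] (U : Finset V) (g : ↥U → ℂ) {x : V}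
    (hx : x ∉ U) : extZ U g x = 0 := dif_neg hx

lemma sum_extend_by_zero {V : Type*} [Fintype V] [DecidableEq V] (U : Finset V)
    (t : V → ℂ) (ht : ∀ x ∉ U, t x = 0) :
    ∑ x : V, t x = ∑ x : ↥U, t ↑x := by
  rw [Finset.sum_coe_sort U t]
  exact (Finset.sum_subset (Finset.subset_univ U) (fun x _ hx => ht x hx)).symm

lemma opS_extZ {V : Type*} [Fintype V] [DecidableEq V] (m : V → ℝ) (b : V → V → ℝ)
    (U : Finset V) (g : ↥U → ℂ) (x : ↥U) :
    opS m b (extZ U g) ↑x = opSDir m b U g x := by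
  simp only [opS, opSDir]
  congr 1
  refine Finset.sum_congr rfl fun y _ => ?_
  rw [extZ_coe]
  rfl

lemma innerM_mul_left {W : Type*} [Fintype W] (m : W → ℝ) (c : ℂ) (f g : W → ℂ) :
    innerM m (fun x => c * f x) g = c * innerM m f g := by
  simp only [innerM, Finset.mul_sum]
  exact Finset.sum_congr rfl fun x _ => by ring

lemma innerM_sum_mul_left {W : Type*} [Fintype W] (m : W → ℝ) {ι : Type*} (S : Finset ι)
    (c : ι → ℂ) (g : ι → W → ℂ) (h : W → ℂ) :
    innerM m (fun x => ∑ s ∈ S, c s * g s x) h = ∑ s ∈ S, c s * innerM m (g s) h := by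
  simp only [innerM, Finset.sum_mul, Finset.mul_sum]
  rw [Finset.sum_comm]
  exact Finset.sum_congr rfl fun s _ => Finset.sum_congr rfl fun x _ => by ring

lemma innerM_sum_mul_right {W : Type*} [Fintype W] (m : W → ℝ) {ι : Type*} (S : Finset ι)
    (c : ι → ℂ) (g : ι → W → ℂ) (h : W → ℂ) :
    innerM m h (fun x => ∑ s ∈ S, c s * g s x)
      = ∑ s ∈ S, (starRingEnd ℂ) (c s) * innerM m h (g s) := by
  simp only [innerM, map_sum, map_mul, Finset.sum_mul, Finset.mul_sum]
  rw [Finset.sum_comm]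
  exact Finset.sum_congr rfl fun s _ => Finset.sum_congr rfl fun x _ => by ring

lemma opS_sum {W : Type*} [Fintype W] (m : W → ℝ) (b : W → W → ℝ)
    {ι : Type*} (S : Finset ι) (c : ι → ℂ) (g : ι → W → ℂ) (x : W) :
    opS m b (fun y => ∑ s ∈ S, c s * g s y) x = ∑ s ∈ S, c s * opS m b (g s) x := by
  simp only [opS]
  have h1 : ∀ y, ((b x y + b y x : ℝ) : ℂ) * ((∑ s ∈ S, c s * g s x) - ∑ s ∈ S, c s * g s y)
      = ∑ s ∈ S, c s * (((b x y + b y x : ℝ) : ℂ) * (g s x - g s y)) := by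
    intro y
    rw [← Finset.sum_sub_distrib, Finset.mul_sum]
    exact Finset.sum_congr rfl fun s _ => by ring
  rw [Finset.sum_congr rfl fun y _ => h1 y, Finset.sum_comm, Finset.mul_sum]
  refine Finset.sum_congr rfl fun s _ => ?_
  rw [← Finset.mul_sum]
  ring

/-- let `G = (V, E⃗)` be a finite connected directed weighted graph
satisfying the Kirchhoff assumption, `A`, `B` subgraphs and `U = (V_U, E⃗_U)` a part of `G`
such that `V = V_A ⊔ V_B = V_{A°} ⊔ V_{B°} ⊔ V_U`, `E⃗ = E⃗_A ⊔ E⃗_B ⊔ E⃗_U`, and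
`∂_E A = ∂_E B = E⃗_U`.  Then for all `1 ≤ k, l ≤ min(#V_{A°}, #V_{B°})`,
`λ_{k+l}(S_G) ≤ max(λ_k(S^D_{A°}), λ_l(S^D_{B°}))`. -/
theorem stmt19 {V : Type*} [Fintype V] [DecidableEq V] (m : V → ℝ) (b : V → V → ℝ)
    (hm : ∀ x, 0 < m x) (hb : ∀ x y, 0 ≤ b x y) (hloop : ∀ x, b x x = 0)
    (hconn : ConnectedGraph b) (hkirch : Kirchhoff b)
    (A B VU : Finset V) (EU : Set (V × V))
    -- `Aint`, `Bint` are the interiors `A°`, `B°`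
    (Aint Bint : Finset V)
    (hAint : (↑Aint : Set V) = interiorSet b ↑A)
    (hBint : (↑Bint : Set V) = interiorSet b ↑B)
    -- (1) `V = V_A ⊔ V_B = V_{A°} ⊔ V_{B°} ⊔ V_U`
    (hABcover : (↑A ∪ ↑B : Set V) = Set.univ) (hABdisj : Disjoint A B)
    (hIntCover : ((↑Aint ∪ ↑Bint ∪ ↑VU : Set V)) = Set.univ)
    (hIntDisj1 : Disjoint Aint Bint) (hIntDisj2 : Disjoint Aint VU)
    (hIntDisj3 : Disjoint Bint VU)
    -- `U` is a part of `G`: its edges join vertices of `V_U` and are edges of `G`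
    (hUpart : ∀ p ∈ EU, p.1 ∈ VU ∧ p.2 ∈ VU ∧ 0 < b p.1 p.2)
    -- (2) `E⃗ = E⃗_A ⊔ E⃗_B ⊔ E⃗_U`, with `E⃗_A`, `E⃗_B` the induced edge sets of the
    -- subgraphs `A`, `B`
    (hEdecomp : ∀ x y, 0 < b x y →
      ((x ∈ A ∧ y ∈ A) ∨ (x ∈ B ∧ y ∈ B) ∨ (x, y) ∈ EU))
    (hEdisj : ∀ x y, (x, y) ∈ EU → ¬ (x ∈ A ∧ y ∈ A) ∧ ¬ (x ∈ B ∧ y ∈ B))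
    -- (3) `∂_E A = ∂_E B = E⃗_U`
    (hbdryA : ∀ x y, (0 < b x y ∧ ((x ∈ A ∧ y ∉ A) ∨ (x ∉ A ∧ y ∈ A))) ↔ (x, y) ∈ EU)
    (hbdryB : ∀ x y, (0 < b x y ∧ ((x ∈ B ∧ y ∉ B) ∨ (x ∉ B ∧ y ∈ B))) ↔ (x, y) ∈ EU)
    (n na nb : ℕ) (hn : n = Fintype.card V)
    (hna : na = Aint.card) (hnb : nb = Bint.card) (hsum : na + nb ≤ n)
    (μG : Fin n → ℝ) (μA : Fin na → ℝ) (μB : Fin nb → ℝ)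
    (hμG : IsMonoEigenListing m (opS m b) μG)
    (hμA : IsMonoEigenListing (fun x : ↥Aint => m ↑x) (opSDir m b Aint) μA)
    (hμB : IsMonoEigenListing (fun x : ↥Bint => m ↑x) (opSDir m b Bint) μB) :
    ∀ (k l : ℕ) (hk1 : 1 ≤ k) (hl1 : 1 ≤ l)
      (hk : k ≤ min na nb) (hl : l ≤ min na nb),
      μG ⟨k + l - 1, by
          have h1 := hk.trans (min_le_left na nb)
          have h2 := hl.trans (min_le_right na nb)
          omega⟩ ≤
        max (μA ⟨k - 1, by have h1 := hk.trans (min_le_left na nb); omega⟩)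
            (μB ⟨l - 1, by have h2 := hl.trans (min_le_right na nb); omega⟩) := by
  intro k l hk1 hl1 hk hl
  obtain ⟨monoG, eG, honG, heigG⟩ := hμG
  obtain ⟨monoA, uA, honA, heigA⟩ := hμA
  obtain ⟨monoB, uB, honB, heigB⟩ := hμB
  have hkna : k ≤ na := hk.trans (min_le_left na nb)
  have hlnb : l ≤ nb := hl.trans (min_le_right na nb)
  have hcodim : k + l - 1 < n := by omega
  -- basic set facts
  have hAsub : ∀ x ∈ Aint, x ∈ A := by
    intro x hx
    have hx' : x ∈ interiorSet b (↑A : Set V) := by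
      rw [← hAint]; exact Finset.mem_coe.mpr hx
    exact Finset.mem_coe.mp hx'.1
  have hdisjAB := Finset.disjoint_left.mp hIntDisj1
  have hnoedge : ∀ x ∈ Bint, ∀ y ∈ Aint, b x y = 0 ∧ b y x = 0 := by
    intro x hx y hy
    have hxB : x ∈ interiorSet b (↑B : Set V) := by
      rw [← hBint]; exact Finset.mem_coe.mpr hx
    have hnb : ¬ Nbr b x y := by
      intro h
      have hyB : y ∈ B := Finset.mem_coe.mp (hxB.2 y h)
      exact Finset.disjoint_left.mp hABdisj (hAsub y hy) hyB
    constructor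
    · exact le_antisymm (le_of_not_gt fun h => hnb (Or.inl h)) (hb x y)
    · exact le_antisymm (le_of_not_gt fun h => hnb (Or.inr h)) (hb y x)
  -- inner product reductions
  have hIAA : ∀ g h : ↥Aint → ℂ, innerM m (extZ Aint g) (extZ Aint h)
      = innerM (fun x : ↥Aint => m ↑x) g h := by
    intro g h
    simp only [innerM]
    rw [sum_extend_by_zero Aint _ (fun x hx => by rw [extZ_not_mem Aint g hx]; ring)]
    exact Finset.sum_congr rfl fun x _ => by rw [extZ_coe, extZ_coe]
  have hIBB : ∀ g h : ↥Bint → ℂ, innerM m (extZ Bint g) (extZ Bint h)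
      = innerM (fun x : ↥Bint => m ↑x) g h := by
    intro g h
    simp only [innerM]
    rw [sum_extend_by_zero Bint _ (fun x hx => by rw [extZ_not_mem Bint g hx]; ring)]
    exact Finset.sum_congr rfl fun x _ => by rw [extZ_coe, extZ_coe]
  have hIAB : ∀ (g : ↥Aint → ℂ) (h : ↥Bint → ℂ),
      innerM m (extZ Aint g) (extZ Bint h) = 0 := by
    intro g h
    refine Finset.sum_eq_zero fun x _ => ?_
    by_cases hx : x ∈ Aint
    · rw [extZ_not_mem Bint h (fun hxB => hdisjAB hx hxB)]
      simp
    · rw [extZ_not_mem Aint g hx]; ring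
  have hIBA : ∀ (g : ↥Bint → ℂ) (h : ↥Aint → ℂ),
      innerM m (extZ Bint g) (extZ Aint h) = 0 := by
    intro g h
    refine Finset.sum_eq_zero fun x _ => ?_
    by_cases hx : x ∈ Aint
    · rw [extZ_not_mem Bint g (fun hxB => hdisjAB hx hxB)]; ring
    · rw [extZ_not_mem Aint h hx]; simp
  -- quadratic form reductions
  have hSAA : ∀ g h : ↥Aint → ℂ, innerM m (opS m b (extZ Aint g)) (extZ Aint h)
      = innerM (fun x : ↥Aint => m ↑x) (opSDir m b Aint g) h := by
    intro g h
    simp only [innerM]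
    rw [sum_extend_by_zero Aint _ (fun x hx => by rw [extZ_not_mem Aint h hx]; simp)]
    exact Finset.sum_congr rfl fun x _ => by rw [opS_extZ, extZ_coe]
  have hSBB : ∀ g h : ↥Bint → ℂ, innerM m (opS m b (extZ Bint g)) (extZ Bint h)
      = innerM (fun x : ↥Bint => m ↑x) (opSDir m b Bint g) h := by
    intro g h
    simp only [innerM]
    rw [sum_extend_by_zero Bint _ (fun x hx => by rw [extZ_not_mem Bint h hx]; simp)]
    exact Finset.sum_congr rfl fun x _ => by rw [opS_extZ, extZ_coe]
  have hSAB : ∀ (g : ↥Aint → ℂ) (h : ↥Bint → ℂ),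
      innerM m (opS m b (extZ Aint g)) (extZ Bint h) = 0 := by
    intro g h
    refine Finset.sum_eq_zero fun x _ => ?_
    by_cases hx : x ∈ Bint
    · have h1 : opS m b (extZ Aint g) x = 0 := by
        have hxA : x ∉ Aint := fun hA => hdisjAB hA hx
        simp only [opS]
        rw [extZ_not_mem Aint g hxA]
        have hz : ∀ y ∈ Finset.univ,
            ((b x y + b y x : ℝ) : ℂ) * ((0 : ℂ) - extZ Aint g y) = 0 := by
          intro y _
          by_cases hy : y ∈ Aint
          · obtain ⟨e1, e2⟩ := hnoedge x hx y hy
            rw [e1, e2]; norm_num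
          · rw [extZ_not_mem Aint g hy]; ring
        rw [Finset.sum_congr rfl hz]
        simp
      rw [h1]; ring
    · rw [extZ_not_mem Bint h hx]; simp
  have hSBA : ∀ (g : ↥Bint → ℂ) (h : ↥Aint → ℂ),
      innerM m (opS m b (extZ Bint g)) (extZ Aint h) = 0 := by
    intro g h
    refine Finset.sum_eq_zero fun x _ => ?_
    by_cases hx : x ∈ Aint
    · have h1 : opS m b (extZ Bint g) x = 0 := by
        have hxB : x ∉ Bint := fun hB => hdisjAB hx hB
        simp only [opS]
        rw [extZ_not_mem Bint g hxB]
        have hz : ∀ y ∈ Finset.univ,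
            ((b x y + b y x : ℝ) : ℂ) * ((0 : ℂ) - extZ Bint g y) = 0 := by
          intro y _
          by_cases hy : y ∈ Bint
          · obtain ⟨e1, e2⟩ := hnoedge y hy x hx
            rw [e1, e2]; norm_num
          · rw [extZ_not_mem Bint g hy]; ring
        rw [Finset.sum_congr rfl hz]
        simp
      rw [h1]; ring
    · rw [extZ_not_mem Aint h hx]; simp
  -- the test family
  set w : Fin (k + l) → (V → ℂ) := fun s =>
    if hs : (s : ℕ) < k then extZ Aint (uA ⟨(s : ℕ), lt_of_lt_of_le hs hkna⟩)
    else extZ Bint (uB ⟨(s : ℕ) - k, by have := s.isLt; omega⟩) with hwdef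
  set ρ : Fin (k + l) → ℝ := fun s =>
    if hs : (s : ℕ) < k then μA ⟨(s : ℕ), lt_of_lt_of_le hs hkna⟩
    else μB ⟨(s : ℕ) - k, by have := s.isLt; omega⟩ with hρdef
  have honW : ∀ s t : Fin (k + l), innerM m (w s) (w t) = if s = t then 1 else 0 := by
    intro s t
    by_cases hs : (s : ℕ) < k <;> by_cases ht : (t : ℕ) < k
    · rw [hwdef]
      simp only [dif_pos hs, dif_pos ht]
      rw [hIAA, honA]
      simp [Fin.ext_iff]
    · rw [hwdef]
      simp only [dif_pos hs, dif_neg ht]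
      rw [hIAB]
      rw [if_neg (show ¬ s = t from fun h => ht (h ▸ hs))]
    · rw [hwdef]
      simp only [dif_neg hs, dif_pos ht]
      rw [hIBA]
      rw [if_neg (show ¬ s = t from fun h => hs (h ▸ ht))]
    · rw [hwdef]
      simp only [dif_neg hs, dif_neg ht]
      rw [hIBB, honB]
      have : ((⟨(s : ℕ) - k, by have := s.isLt; omega⟩ : Fin nb)
          = ⟨(t : ℕ) - k, by have := t.isLt; omega⟩) ↔ s = t := by
        simp only [Fin.ext_iff]
        omega
      simp only [this]
  have hSW : ∀ s t : Fin (k + l),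
      innerM m (opS m b (w s)) (w t) = if s = t then ((ρ s : ℝ) : ℂ) else 0 := by
    intro s t
    by_cases hs : (s : ℕ) < k <;> by_cases ht : (t : ℕ) < k
    · rw [hwdef, hρdef]
      simp only [dif_pos hs, dif_pos ht]
      rw [hSAA, heigA]
      rw [show (fun x => ((μA ⟨(s : ℕ), lt_of_lt_of_le hs hkna⟩ : ℝ) : ℂ)
            * uA ⟨(s : ℕ), lt_of_lt_of_le hs hkna⟩ x)
          = fun x => ((μA ⟨(s : ℕ), lt_of_lt_of_le hs hkna⟩ : ℝ) : ℂ)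
            * uA ⟨(s : ℕ), lt_of_lt_of_le hs hkna⟩ x from rfl]
      rw [innerM_mul_left, honA]
      by_cases hst : s = t
      · subst hst
        simp
      · rw [if_neg hst, if_neg (fun h => hst (by simpa [Fin.ext_iff] using h))]
        ring
    · rw [hwdef]
      simp only [dif_pos hs, dif_neg ht]
      rw [hSAB, if_neg (show ¬ s = t from fun h => ht (h ▸ hs))]
    · rw [hwdef]
      simp only [dif_neg hs, dif_pos ht]
      rw [hSBA, if_neg (show ¬ s = t from fun h => hs (h ▸ ht))]
    · rw [hwdef, hρdef]
      simp only [dif_neg hs, dif_neg ht]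
      rw [hSBB, heigB, innerM_mul_left, honB]
      by_cases hst : s = t
      · subst hst
        simp
      · have hne : (⟨(s : ℕ) - k, by have := s.isLt; omega⟩ : Fin nb)
            ≠ ⟨(t : ℕ) - k, by have := t.isLt; omega⟩ := by
          intro h
          apply hst
          simp only [Fin.ext_iff] at h ⊢
          omega
        rw [if_neg hne, if_neg hst]
        ring
  -- kernel element orthogonal to first k+l-1 eigenfunctions
  set M : Matrix (Fin (k + l - 1)) (Fin (k + l)) ℂ :=
    fun t s => innerM m (w s) (eG ⟨(t : ℕ), lt_trans t.isLt hcodim⟩) with hMdef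
  have hkerex : ∃ x0 : Fin (k + l) → ℂ, x0 ≠ 0 ∧ M.mulVecLin x0 = 0 := by
    by_contra hcon
    push_neg at hcon
    have hinj : Function.Injective M.mulVecLin := by
      rw [← LinearMap.ker_eq_bot]
      by_contra hne
      obtain ⟨x, hxmem, hxne⟩ := (Submodule.ne_bot_iff _).mp hne
      exact hcon x hxne (LinearMap.mem_ker.mp hxmem)
    have hle := LinearMap.finrank_le_finrank_of_injective hinj
    simp only [Module.finrank_pi, Fintype.card_fin] at hle
    omega
  obtain ⟨x0, hx0ne, hx0ker⟩ := hkerex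
  set f : V → ℂ := fun x => ∑ s, x0 s * w s x with hfdef
  -- eigenbasis of the global operator
  have hlinG : LinearIndependent ℂ eG := by
    rw [linearIndependent_iff']
    intro s g hsum0 i hi
    have hfun : (∑ j ∈ s, g j • eG j) = fun x => ∑ j ∈ s, g j * eG j x := by
      funext x
      simp
    have h0 : innerM m (fun x => ∑ j ∈ s, g j * eG j x) (eG i) = 0 := by
      rw [← hfun, hsum0]
      simp [innerM]
    rw [innerM_sum_mul_left] at h0
    rw [Finset.sum_congr rfl (fun j _ => by rw [honG])] at h0
    simpa [mul_ite, Finset.sum_ite_eq', hi] using h0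
  have hnpos : 0 < n := by omega
  haveI : Nonempty (Fin n) := ⟨⟨0, hnpos⟩⟩
  have hcard : Fintype.card (Fin n) = Module.finrank ℂ (V → ℂ) := by
    simp [hn]
  let BG : Module.Basis (Fin n) ℂ (V → ℂ) := basisOfLinearIndependentOfCardEqFinrank hlinG hcard
  have hBGcoe : ∀ i, BG i = eG i := by
    intro i
    simp [BG, coe_basisOfLinearIndependentOfCardEqFinrank]
  set a : Fin n → ℂ := fun t => BG.repr f t with hadef
  have hrepr : f = fun x => ∑ t, a t * eG t x := by
    funext x
    conv_lhs => rw [← Module.Basis.sum_repr BG f]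
    simp only [Finset.sum_apply, Pi.smul_apply, smul_eq_mul]
    refine Finset.sum_congr rfl fun t _ => ?_
    rw [hBGcoe]
  have hcoef : ∀ j : Fin n, innerM m f (eG j) = a j := by
    intro j
    rw [hrepr, innerM_sum_mul_left]
    rw [Finset.sum_congr rfl (fun t _ => by rw [honG])]
    simp [mul_ite, Finset.sum_ite_eq']
  have hx0' : ∀ jj : Fin n, (jj : ℕ) < k + l - 1 →
      ∑ s, innerM m (w s) (eG jj) * x0 s = 0 := by
    intro jj hj
    have h1 := congrFun hx0ker ⟨(jj : ℕ), hj⟩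
    simp only [Matrix.mulVecLin_apply, Matrix.mulVec, dotProduct, Pi.zero_apply,
      hMdef, Fin.eta] at h1
    exact h1
  have hZero : ∀ j : Fin n, (j : ℕ) < k + l - 1 → a j = 0 := by
    intro j hj
    rw [← hcoef j, hfdef, innerM_sum_mul_left]
    exact (Finset.sum_congr rfl fun s _ => mul_comm _ _).trans (hx0' j hj)
  -- norms
  have hNormW : innerM m f f = ((∑ s, Complex.normSq (x0 s) : ℝ) : ℂ) := by
    rw [hfdef, innerM_sum_mul_left]
    have h1 : ∀ s ∈ (Finset.univ : Finset (Fin (k + l))),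
        x0 s * innerM m (w s) (fun x => ∑ t, x0 t * w t x)
          = ((Complex.normSq (x0 s) : ℝ) : ℂ) := by
      intro s _
      rw [innerM_sum_mul_right]
      rw [Finset.sum_congr rfl (fun t _ => by rw [honW])]
      simp only [mul_ite, mul_one, mul_zero, Finset.sum_ite_eq, Finset.mem_univ, if_true]
      rw [Complex.mul_conj]
    rw [Finset.sum_congr rfl h1]
    norm_cast
  have hNormA : innerM m f f = ((∑ t, Complex.normSq (a t) : ℝ) : ℂ) := by
    rw [hrepr, innerM_sum_mul_left]
    have h1 : ∀ t ∈ (Finset.univ : Finset (Fin n)),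
        a t * innerM m (eG t) (fun x => ∑ t', a t' * eG t' x)
          = ((Complex.normSq (a t) : ℝ) : ℂ) := by
      intro t _
      rw [innerM_sum_mul_right]
      rw [Finset.sum_congr rfl (fun t' _ => by rw [honG])]
      simp only [mul_ite, mul_one, mul_zero, Finset.sum_ite_eq, Finset.mem_univ, if_true]
      rw [Complex.mul_conj]
    rw [Finset.sum_congr rfl h1]
    norm_cast
  -- quadratic form, two ways
  have hopSfG : opS m b f = fun x => ∑ t, (a t * ((μG t : ℝ) : ℂ)) * eG t x := by
    funext x
    rw [hrepr, opS_sum]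
    refine Finset.sum_congr rfl fun t _ => ?_
    simp only [heigG]
    ring
  have hQG : innerM m (opS m b f) f = ((∑ t, μG t * Complex.normSq (a t) : ℝ) : ℂ) := by
    rw [hopSfG, hrepr, innerM_sum_mul_left]
    have h1 : ∀ t ∈ (Finset.univ : Finset (Fin n)),
        (a t * ((μG t : ℝ) : ℂ)) * innerM m (eG t) (fun x => ∑ t', a t' * eG t' x)
          = ((μG t * Complex.normSq (a t) : ℝ) : ℂ) := by
      intro t _
      rw [innerM_sum_mul_right]
      rw [Finset.sum_congr rfl (fun t' _ => by rw [honG])]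
      simp only [mul_ite, mul_one, mul_zero, Finset.sum_ite_eq, Finset.mem_univ, if_true]
      rw [show (a t * ((μG t : ℝ) : ℂ)) * (starRingEnd ℂ) (a t)
          = ((μG t : ℝ) : ℂ) * (a t * (starRingEnd ℂ) (a t)) from by ring,
        Complex.mul_conj]
      push_cast
      ring
    rw [Finset.sum_congr rfl h1]
    norm_cast
  have hopSfW : opS m b f = fun x => ∑ s, x0 s * opS m b (w s) x := by
    funext x
    rw [hfdef, opS_sum]
  have hQW : innerM m (opS m b f) f
      = ((∑ s, ρ s * Complex.normSq (x0 s) : ℝ) : ℂ) := by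
    rw [hopSfW, hfdef, innerM_sum_mul_left]
    have h1 : ∀ s ∈ (Finset.univ : Finset (Fin (k + l))),
        x0 s * innerM m (opS m b (w s)) (fun x => ∑ t, x0 t * w t x)
          = ((ρ s * Complex.normSq (x0 s) : ℝ) : ℂ) := by
      intro s _
      rw [innerM_sum_mul_right]
      rw [Finset.sum_congr rfl (fun t _ => by rw [hSW])]
      simp only [mul_ite, mul_zero, Finset.sum_ite_eq, Finset.mem_univ, if_true]
      rw [show x0 s * ((starRingEnd ℂ) (x0 s) * ((ρ s : ℝ) : ℂ))
          = ((ρ s : ℝ) : ℂ) * (x0 s * (starRingEnd ℂ) (x0 s)) from by ring,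
        Complex.mul_conj]
      push_cast
      ring
    rw [Finset.sum_congr rfl h1]
    norm_cast
  -- assemble
  have hTa : (∑ s, Complex.normSq (x0 s)) = (∑ t, Complex.normSq (a t)) := by
    have h := hNormW.symm.trans hNormA
    exact_mod_cast h
  have hQeq : (∑ t, μG t * Complex.normSq (a t)) = (∑ s, ρ s * Complex.normSq (x0 s)) := by
    have h := hQG.symm.trans hQW
    exact_mod_cast h
  have hTpos : 0 < ∑ s, Complex.normSq (x0 s) := by
    obtain ⟨s0, hs0⟩ := Function.ne_iff.mp hx0ne
    exact Finset.sum_pos' (fun s _ => Complex.normSq_nonneg _)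
      ⟨s0, Finset.mem_univ _, Complex.normSq_pos.mpr hs0⟩
  have hlow : μG ⟨k + l - 1, hcodim⟩ * (∑ s, Complex.normSq (x0 s))
      ≤ ∑ t, μG t * Complex.normSq (a t) := by
    rw [hTa, Finset.mul_sum]
    refine Finset.sum_le_sum fun t _ => ?_
    by_cases ht : (t : ℕ) < k + l - 1
    · rw [hZero t ht]
      simp
    · refine mul_le_mul_of_nonneg_right (monoG ?_) (Complex.normSq_nonneg _)
      rw [Fin.le_def]
      simp only []
      omega
  have hρle : ∀ s : Fin (k + l),
      ρ s ≤ max (μA ⟨k - 1, by omega⟩) (μB ⟨l - 1, by omega⟩) := by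
    intro s
    simp only [hρdef]
    by_cases hs : (s : ℕ) < k
    · rw [dif_pos hs]
      refine le_trans (monoA ?_) (le_max_left _ _)
      rw [Fin.le_def]
      simp only []
      omega
    · rw [dif_neg hs]
      refine le_trans (monoB ?_) (le_max_right _ _)
      rw [Fin.le_def]
      simp only []
      have := s.isLt
      omega
  have hhigh : (∑ s, ρ s * Complex.normSq (x0 s))
      ≤ max (μA ⟨k - 1, by omega⟩) (μB ⟨l - 1, by omega⟩) * (∑ s, Complex.normSq (x0 s)) := by
    rw [Finset.mul_sum]
    exact Finset.sum_le_sum fun s _ =>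
      mul_le_mul_of_nonneg_right (hρle s) (Complex.normSq_nonneg _)
  have hfinal : μG ⟨k + l - 1, hcodim⟩ * (∑ s, Complex.normSq (x0 s))
      ≤ max (μA ⟨k - 1, by omega⟩) (μB ⟨l - 1, by omega⟩) * (∑ s, Complex.normSq (x0 s)) :=
    hlow.trans (le_of_eq hQeq) |>.trans hhigh
  exact le_of_mul_le_mul_right hfinal hTpos
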